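/- For 0 < μ < 1, the function f(x) = (sin(πμ)/(πμ)) · 1/(x² + 2x cos(πμ) + 1) for x > 0 is a probability density on (0,∞), and its cumulative distribution function is F(x) = 1 − (1/(πμ)) arctan(sin(πμ)/(cos(πμ) + x)). -/

import Mathlib

open MeasureTheory Set Real

/-- The continuous branch in `(0, π)` of `arctan (s / (c + x))`. -/
noncomputable def arcBranch (c s x : ℝ) : ℝ :=
  if 0 < c + x then Real.arctan (s / (c + x))
  else if c + x = 0 then Real.pi / 2
  else Real.pi + Real.arctan (s / (c + x))

lemma arcBranch_eq {c s : ℝ} (hs : 0 < s) (x : ℝ) :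
    arcBranch c s x = Real.pi / 2 - Real.arctan ((c + x) / s) := by
  unfold arcBranch
  rcases lt_trichotomy 0 (c + x) with h | h | h
  · rw [if_pos h]
    have he : s / (c + x) = ((c + x) / s)⁻¹ := by
      field_simp
    rw [he, Real.arctan_inv_of_pos (div_pos h hs)]
  · rw [if_neg (by rw [← h]; exact lt_irrefl 0), if_pos h.symm, ← h]
    simp
  · rw [if_neg (not_lt.2 h.le), if_neg (ne_of_lt h)]
    have he : s / (c + x) = ((c + x) / s)⁻¹ := by
      field_simp
    rw [he, Real.arctan_inv_of_neg (div_neg_of_neg_of_pos h hs)]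
    ring

theorem density_Z_mu (μ : ℝ) (hμ0 : 0 < μ) (hμ1 : μ < 1) :
    (∫ x in Ioi (0:ℝ),
        (Real.sin (Real.pi * μ) / (Real.pi * μ)) *
          (1 / (x ^ 2 + 2 * x * Real.cos (Real.pi * μ) + 1)) = 1) ∧
    (∀ x : ℝ, 0 ≤ x →
      ∫ y in Ioo (0:ℝ) x,
          (Real.sin (Real.pi * μ) / (Real.pi * μ)) *
            (1 / (y ^ 2 + 2 * y * Real.cos (Real.pi * μ) + 1))
        = 1 - (1 / (Real.pi * μ)) *
            arcBranch (Real.cos (Real.pi * μ)) (Real.sin (Real.pi * μ)) x) := by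
  set c := Real.cos (Real.pi * μ) with hc
  set s := Real.sin (Real.pi * μ) with hsdef
  have hπμ0 : 0 < Real.pi * μ := mul_pos Real.pi_pos hμ0
  have hπμπ : Real.pi * μ < Real.pi := by
    nlinarith [Real.pi_pos]
  have hs : 0 < s := Real.sin_pos_of_pos_of_lt_pi hπμ0 hπμπ
  have hcs : c ^ 2 + s ^ 2 = 1 := by
    rw [hc, hsdef]; rw [← Real.sin_sq_add_cos_sq (Real.pi * μ)]; ring
  have hden : ∀ y : ℝ, y ^ 2 + 2 * y * c + 1 = (c + y) ^ 2 + s ^ 2 := by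
    intro y; nlinarith [hcs]
  have hdenpos : ∀ y : ℝ, 0 < y ^ 2 + 2 * y * c + 1 := by
    intro y; rw [hden]; positivity
  -- the antiderivative
  set G : ℝ → ℝ := fun t => (1 / (Real.pi * μ)) * Real.arctan ((c + t) / s) with hG
  have hderiv : ∀ t : ℝ, HasDerivAt G
      ((s / (Real.pi * μ)) * (1 / (t ^ 2 + 2 * t * c + 1))) t := by
    intro t
    have h1 : HasDerivAt (fun u : ℝ => (c + u) / s) (1 / s) t := by
      simpa using ((hasDerivAt_id t).const_add c).div_const s
    have h2 : HasDerivAt (fun u : ℝ => Real.arctan ((c + u) / s))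
        ((1 / (1 + ((c + t) / s) ^ 2)) * (1 / s)) t := by
      exact (Real.hasDerivAt_arctan ((c + t) / s)).comp t h1
    have h3 : HasDerivAt (fun y : ℝ => 1 / (Real.pi * μ) * Real.arctan ((c + y) / s))
        (1 / (Real.pi * μ) * (1 / (1 + ((c + t) / s) ^ 2) * (1 / s))) t :=
      h2.const_mul (1 / (Real.pi * μ))
    convert h3 using 1
    rw [hden t]
    have hs' : (s : ℝ) ≠ 0 := ne_of_gt hs
    have h4 : (0:ℝ) < (c + t) ^ 2 + s ^ 2 := by positivity
    field_simp
    ring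
  have hGcont : Continuous G := by
    apply continuous_const.mul
    exact Real.continuous_arctan.comp ((continuous_const.add continuous_id).div_const s)
  -- value at 0
  have harc0 : Real.arctan (c / s) = Real.pi / 2 - Real.pi * μ := by
    have ht : c / s = Real.tan (Real.pi / 2 - Real.pi * μ) := by
      rw [Real.tan_pi_div_two_sub, Real.tan_eq_sin_div_cos, inv_div, hc, hsdef]
    rw [ht, Real.arctan_tan (by linarith) (by linarith)]
  have hG0 : G 0 = (1 / (Real.pi * μ)) * (Real.pi / 2 - Real.pi * μ) := by
    simp only [hG, add_zero, harc0]
  -- limit at infinity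
  have hlim : Filter.Tendsto G Filter.atTop (nhds ((1 / (Real.pi * μ)) * (Real.pi / 2))) := by
    apply Filter.Tendsto.const_mul
    have h1 : Filter.Tendsto (fun t : ℝ => (c + t) / s) Filter.atTop Filter.atTop := by
      apply Filter.Tendsto.atTop_div_const hs
      exact Filter.tendsto_atTop_add_const_left _ c Filter.tendsto_id
    exact (Real.tendsto_arctan_atTop.mono_right nhdsWithin_le_nhds).comp h1
  have hfnonneg : ∀ y : ℝ, 0 ≤ (s / (Real.pi * μ)) * (1 / (y ^ 2 + 2 * y * c + 1)) := by
    intro y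
    have := hdenpos y
    positivity
  have hfeq : ∀ y : ℝ, (s / (Real.pi * μ)) * (1 / (y ^ 2 + 2 * y * c + 1)) =
      (Real.sin (Real.pi * μ) / (Real.pi * μ)) * (1 / (y ^ 2 + 2 * y * Real.cos (Real.pi * μ) + 1)) := by
    intro y; rw [← hc, ← hsdef]
  constructor
  · have key : ∫ y in Ioi (0:ℝ), (s / (Real.pi * μ)) * (1 / (y ^ 2 + 2 * y * c + 1))
        = (1 / (Real.pi * μ)) * (Real.pi / 2) - G 0 := by
      exact integral_Ioi_of_hasDerivAt_of_nonneg hGcont.continuousWithinAt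
        (fun t _ => hderiv t) (fun t _ => hfnonneg t) hlim
    have : ∫ x in Ioi (0:ℝ),
        (Real.sin (Real.pi * μ) / (Real.pi * μ)) *
          (1 / (x ^ 2 + 2 * x * Real.cos (Real.pi * μ) + 1))
        = (1 / (Real.pi * μ)) * (Real.pi / 2) - G 0 := by
      rw [← key]
    rw [this, hG0]
    have hπμ : (Real.pi * μ) ≠ 0 := ne_of_gt hπμ0
    field_simp
    ring
  · intro x hx
    have hcontf : Continuous fun y : ℝ =>
        (s / (Real.pi * μ)) * (1 / (y ^ 2 + 2 * y * c + 1)) := by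
      apply continuous_const.mul
      apply Continuous.div continuous_const (by continuity)
      intro y; exact ne_of_gt (hdenpos y)
    have hFTC : ∫ y in (0:ℝ)..x, (s / (Real.pi * μ)) * (1 / (y ^ 2 + 2 * y * c + 1))
        = G x - G 0 := by
      exact intervalIntegral.integral_eq_sub_of_hasDerivAt
        (fun t _ => hderiv t) (hcontf.intervalIntegrable 0 x)
    have hIoo : ∫ y in Ioo (0:ℝ) x,
        (Real.sin (Real.pi * μ) / (Real.pi * μ)) *
          (1 / (y ^ 2 + 2 * y * Real.cos (Real.pi * μ) + 1)) = G x - G 0 := by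
      rw [← hFTC, intervalIntegral.integral_of_le hx, ← integral_Ioc_eq_integral_Ioo]
    rw [hIoo, arcBranch_eq hs x, hG0]
    simp only [hG]
    have hπμ : (Real.pi * μ) ≠ 0 := ne_of_gt hπμ0
    field_simp
    ring
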